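/- With E₀ the Gallager source function of a joint distribution p_{XY} on finite alphabets, the ratio E₀(ρ)/ρ is nondecreasing on (0,∞); its derivative equals D(p̄^ρ_{XY}‖p_{XY})/ρ², which is strictly positive unless p_{X|Y} is conditionally uniform on its support. -/

import Mathlib

/-- The `X–Y` tilted distribution `p̄^ρ_{XY}` of a joint pmf `p` on `𝒳 × 𝒴`. -/
noncomputable def tilt {𝒳 𝒴 : Type*} [Fintype 𝒳] [Fintype 𝒴]
    (p : 𝒳 × 𝒴 → ℝ) (ρ : ℝ) (z : 𝒳 × 𝒴) : ℝ :=
  ((∑ s, p (s, z.2) ^ ((1 : ℝ) / (1 + ρ))) ^ (1 + ρ)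
      / ∑ t, (∑ s, p (s, t) ^ ((1 : ℝ) / (1 + ρ))) ^ (1 + ρ))
    * (p z ^ ((1 : ℝ) / (1 + ρ)) / ∑ s, p (s, z.2) ^ ((1 : ℝ) / (1 + ρ)))

/-- KL divergence (in bits) between pmfs on a finite set. -/
noncomputable def klDiv {α : Type*} [Fintype α] (q p : α → ℝ) : ℝ :=
  ∑ a, q a * Real.logb 2 (q a / p a)

/-- Gallager source function `E₀(ρ)` for a joint source with side-information. -/
noncomputable def gallagerE0 {𝒳 𝒴 : Type*} [Fintype 𝒳] [Fintype 𝒴]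
    (p : 𝒳 × 𝒴 → ℝ) (ρ : ℝ) : ℝ :=
  Real.logb 2 (∑ y, (∑ x, p (x, y) ^ ((1 : ℝ) / (1 + ρ))) ^ (1 + ρ))

/-- `p_{X|Y}` is conditionally uniform on its support with a common support size `M`. -/
def CondUniform {𝒳 𝒴 : Type*} [Fintype 𝒳] [Fintype 𝒴] (p : 𝒳 × 𝒴 → ℝ) : Prop :=
  ∃ M : ℕ, ∀ z : 𝒳 × 𝒴, p z ≠ 0 → p z / (∑ x, p (x, z.2)) = 1 / (M : ℝ)

open Real Finset
set_option linter.unusedSectionVars false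
set_option linter.unusedVariables false

namespace E0aux
variable {𝒳 𝒴 : Type*} [Fintype 𝒳] [Fintype 𝒴]

noncomputable def S (p : 𝒳 × 𝒴 → ℝ) (t : ℝ) (y : 𝒴) : ℝ := ∑ x, p (x, y) ^ ((1:ℝ)/(1+t))
noncomputable def F (p : 𝒳 × 𝒴 → ℝ) (t : ℝ) : ℝ := ∑ y, S p t y ^ (1 + t)

variable {p : 𝒳 × 𝒴 → ℝ} {ρ : ℝ}

lemma S_pos (hp : ∀ z, 0 ≤ p z) (hY : ∀ y, 0 < ∑ x, p (x, y)) {t : ℝ} (ht : 0 < 1 + t)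
    (y : 𝒴) : 0 < S p t y := by
  have : ∃ x, 0 < p (x, y) := by
    by_contra h
    push_neg at h
    have : ∑ x, p (x, y) = 0 :=
      Finset.sum_eq_zero fun x _ => le_antisymm (h x) (hp _)
    exact absurd (hY y) (by simp [this])
  obtain ⟨x, hx⟩ := this
  refine Finset.sum_pos' (fun x _ => Real.rpow_nonneg (hp _) _) ⟨x, Finset.mem_univ x, ?_⟩
  exact Real.rpow_pos_of_pos hx _

lemma F_pos [Nonempty 𝒴] (hp : ∀ z, 0 ≤ p z) (hY : ∀ y, 0 < ∑ x, p (x, y)) {t : ℝ}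
    (ht : 0 < 1 + t) : 0 < F p t :=
  Finset.sum_pos (fun y _ => Real.rpow_pos_of_pos (S_pos hp hY ht y) _) univ_nonempty



/-- derivative of the exponent `1/(1+t)` -/
lemma hasDerivAt_exponent (hρ : 0 < ρ) :
    HasDerivAt (fun t : ℝ => (1:ℝ)/(1+t)) (-(1/(1+ρ)^2)) ρ := by
  have h : HasDerivAt (fun t : ℝ => 1 + t) 1 ρ := (hasDerivAt_id ρ).const_add 1
  have := h.fun_inv (by positivity)
  simpa [one_div, neg_div] using this

lemma hasDerivAt_pow_term (hρ : 0 < ρ) (c : ℝ) (hc : 0 ≤ c) :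
    HasDerivAt (fun t : ℝ => c ^ ((1:ℝ)/(1+t)))
      (c ^ ((1:ℝ)/(1+ρ)) * Real.log c * (-(1/(1+ρ)^2))) ρ := by
  rcases eq_or_lt_of_le hc with h0 | h0
  · subst h0
    have hev : (fun t : ℝ => (0:ℝ) ^ ((1:ℝ)/(1+t))) =ᶠ[nhds ρ] fun _ => (0:ℝ) := by
      filter_upwards [eventually_gt_nhds (show (-1:ℝ) < ρ by linarith)] with t ht
      have h1t : (0:ℝ) < 1 + t := by linarith
      rw [Real.zero_rpow (by positivity)]
    rw [Real.zero_rpow (show (1:ℝ)/(1+ρ) ≠ 0 by positivity)]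
    simpa using (hasDerivAt_const ρ (0:ℝ)).congr_of_eventuallyEq hev
  · have hu := hasDerivAt_exponent hρ
    have h := (hu.mul_const (Real.log c)).exp
    have hfe : (fun t : ℝ => Real.exp ((1/(1+t)) * Real.log c))
        = fun t : ℝ => c ^ ((1:ℝ)/(1+t)) := by
      funext t
      rw [Real.rpow_def_of_pos h0, mul_comm]
    rw [hfe] at h
    convert h using 1
    rw [Real.rpow_def_of_pos h0, mul_comm (Real.log c)]
    ring

noncomputable def S' (p : 𝒳 × 𝒴 → ℝ) (ρ : ℝ) (y : 𝒴) : ℝ :=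
  ∑ x, p (x, y) ^ ((1:ℝ)/(1+ρ)) * Real.log (p (x, y)) * (-(1/(1+ρ)^2))

lemma hasDerivAt_S (hp : ∀ z, 0 ≤ p z) (hρ : 0 < ρ) (y : 𝒴) :
    HasDerivAt (fun t => S p t y) (S' p ρ y) ρ :=
  HasDerivAt.fun_sum fun x _ => hasDerivAt_pow_term hρ _ (hp _)

noncomputable def T' (p : 𝒳 × 𝒴 → ℝ) (ρ : ℝ) (y : 𝒴) : ℝ :=
  S p ρ y ^ (1+ρ) * (Real.log (S p ρ y) + (1+ρ) * (S' p ρ y / S p ρ y))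

lemma hasDerivAt_Spow (hp : ∀ z, 0 ≤ p z) (hY : ∀ y, 0 < ∑ x, p (x, y)) (hρ : 0 < ρ)
    (y : 𝒴) : HasDerivAt (fun t => S p t y ^ (1 + t)) (T' p ρ y) ρ := by
  have hSpos : 0 < S p ρ y := S_pos hp hY (by linarith) y
  have h1 : HasDerivAt (fun t : ℝ => 1 + t) 1 ρ := (hasDerivAt_id ρ).const_add 1
  have h2 : HasDerivAt (fun t => Real.log (S p t y)) (S' p ρ y / S p ρ y) ρ :=
    (hasDerivAt_S hp hρ y).log hSpos.ne'
  have h := (h1.fun_mul h2).exp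
  have hev : (fun t => S p t y ^ (1 + t))
      =ᶠ[nhds ρ] (fun t => Real.exp ((1+t) * Real.log (S p t y))) := by
    filter_upwards [eventually_gt_nhds (show (-1:ℝ) < ρ by linarith)] with t ht
    rw [Real.rpow_def_of_pos (S_pos hp hY (by linarith) y), mul_comm]
  refine (h.congr_of_eventuallyEq hev).congr_deriv ?_
  rw [T', Real.rpow_def_of_pos hSpos, mul_comm (Real.log (S p ρ y))]
  ring

noncomputable def F' (p : 𝒳 × 𝒴 → ℝ) (ρ : ℝ) : ℝ := ∑ y, T' p ρ y

lemma hasDerivAt_F (hp : ∀ z, 0 ≤ p z) (hY : ∀ y, 0 < ∑ x, p (x, y)) (hρ : 0 < ρ) :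
    HasDerivAt (F p) (F' p ρ) ρ :=
  HasDerivAt.fun_sum fun y _ => hasDerivAt_Spow hp hY hρ y

lemma gallagerE0_eq (t : ℝ) : gallagerE0 p t = Real.log (F p t) / Real.log 2 := rfl

lemma hasDerivAt_E0 [Nonempty 𝒴] (hp : ∀ z, 0 ≤ p z) (hY : ∀ y, 0 < ∑ x, p (x, y))
    (hρ : 0 < ρ) :
    HasDerivAt (gallagerE0 p) ((F' p ρ / F p ρ) / Real.log 2) ρ := by
  have hF := (hasDerivAt_F hp hY hρ).log (F_pos hp hY (by linarith)).ne'
  exact hF.div_const _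


section Tilt
variable [Nonempty 𝒴]

lemma tilt_eq (hp : ∀ z, 0 ≤ p z) (hY : ∀ y, 0 < ∑ x, p (x, y)) (hρ : 0 < ρ) (z : 𝒳 × 𝒴) :
    tilt p ρ z = S p ρ z.2 ^ ρ * p z ^ ((1:ℝ)/(1+ρ)) / F p ρ := by
  have hS : 0 < S p ρ z.2 := S_pos hp hY (by linarith) z.2
  have hF : 0 < F p ρ := F_pos hp hY (by linarith)
  show S p ρ z.2 ^ (1+ρ) / F p ρ * (p z ^ ((1:ℝ)/(1+ρ)) / S p ρ z.2) = _
  rw [show (1+ρ) = ρ + 1 by ring, Real.rpow_add_one hS.ne']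
  field_simp

lemma tilt_nonneg (hp : ∀ z, 0 ≤ p z) (hY : ∀ y, 0 < ∑ x, p (x, y)) (hρ : 0 < ρ)
    (z : 𝒳 × 𝒴) : 0 ≤ tilt p ρ z := by
  rw [tilt_eq hp hY hρ]
  have hS : 0 < S p ρ z.2 := S_pos hp hY (by linarith) z.2
  have hF : 0 < F p ρ := F_pos hp hY (by linarith)
  exact div_nonneg (mul_nonneg (Real.rpow_nonneg hS.le _) (Real.rpow_nonneg (hp z) _)) hF.le

lemma tilt_eq_zero_iff (hp : ∀ z, 0 ≤ p z) (hY : ∀ y, 0 < ∑ x, p (x, y)) (hρ : 0 < ρ)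
    (z : 𝒳 × 𝒴) : tilt p ρ z = 0 ↔ p z = 0 := by
  have hS : 0 < S p ρ z.2 := S_pos hp hY (by linarith) z.2
  have hF : 0 < F p ρ := F_pos hp hY (by linarith)
  rw [tilt_eq hp hY hρ, div_eq_zero_iff]
  constructor
  · rintro (h | h)
    · rcases mul_eq_zero.1 h with h | h
      · exact absurd h (Real.rpow_pos_of_pos hS ρ).ne'
      · exact (Real.rpow_eq_zero (hp z) (by positivity)).1 h
    · exact absurd h hF.ne'
  · intro h
    left
    rw [h, Real.zero_rpow (by positivity), mul_zero]

lemma sum_tilt_row (hp : ∀ z, 0 ≤ p z) (hY : ∀ y, 0 < ∑ x, p (x, y)) (hρ : 0 < ρ)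
    (y : 𝒴) : ∑ x, tilt p ρ (x, y) = S p ρ y ^ (1 + ρ) / F p ρ := by
  have hS : 0 < S p ρ y := S_pos hp hY (by linarith) y
  simp only [tilt_eq hp hY hρ]
  rw [← Finset.sum_div, ← Finset.mul_sum]
  congr 1
  rw [show (∑ x, p (x, y) ^ ((1:ℝ)/(1+ρ))) = S p ρ y from rfl,
    show (1+ρ) = ρ + 1 by ring, Real.rpow_add_one hS.ne']

lemma sum_tilt (hp : ∀ z, 0 ≤ p z) (hY : ∀ y, 0 < ∑ x, p (x, y)) (hρ : 0 < ρ) :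
    ∑ z, tilt p ρ z = 1 := by
  have hF : 0 < F p ρ := F_pos hp hY (by linarith)
  rw [Fintype.sum_prod_type, Finset.sum_comm]
  simp only [sum_tilt_row hp hY hρ]
  rw [← Finset.sum_div]
  exact div_self hF.ne'


noncomputable def W (p : 𝒳 × 𝒴 → ℝ) (ρ : ℝ) (y : 𝒴) : ℝ :=
  ∑ x, p (x, y) ^ ((1:ℝ)/(1+ρ)) * Real.log (p (x, y))

lemma T'_eq (hp : ∀ z, 0 ≤ p z) (hY : ∀ y, 0 < ∑ x, p (x, y)) (hρ : 0 < ρ) (y : 𝒴) :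
    T' p ρ y = S p ρ y ^ (1+ρ) * Real.log (S p ρ y)
      - (1/(1+ρ)) * (S p ρ y ^ ρ * W p ρ y) := by
  have hS : 0 < S p ρ y := S_pos hp hY (by linarith) y
  have hS' : S' p ρ y = W p ρ y * (-(1/(1+ρ)^2)) := by
    rw [S', W, Finset.sum_mul]
  rw [T', hS', show (1+ρ) = ρ + 1 by ring, Real.rpow_add_one hS.ne']
  have h1 : (1:ℝ) + ρ ≠ 0 := by positivity
  field_simp
  ring

/-- The per-term identity for the KL sum. -/
lemma tilt_log_term (hp : ∀ z, 0 ≤ p z) (hY : ∀ y, 0 < ∑ x, p (x, y)) (hρ : 0 < ρ)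
    (z : 𝒳 × 𝒴) :
    tilt p ρ z * Real.log (tilt p ρ z / p z)
      = ρ * (tilt p ρ z * Real.log (S p ρ z.2))
        - (ρ/(1+ρ)) * (tilt p ρ z * Real.log (p z))
        - tilt p ρ z * Real.log (F p ρ) := by
  have hS : 0 < S p ρ z.2 := S_pos hp hY (by linarith) z.2
  have hF : 0 < F p ρ := F_pos hp hY (by linarith)
  by_cases hz : p z = 0
  · rw [(tilt_eq_zero_iff hp hY hρ z).2 hz]
    ring
  · have hpz : 0 < p z := lt_of_le_of_ne (hp z) (Ne.symm hz)
    have hratio : tilt p ρ z / p z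
        = S p ρ z.2 ^ ρ * p z ^ ((1:ℝ)/(1+ρ) - 1) / F p ρ := by
      rw [tilt_eq hp hY hρ, Real.rpow_sub hpz, Real.rpow_one]
      field_simp
    rw [hratio, Real.log_div (by positivity) hF.ne',
      Real.log_mul (by positivity) (by positivity),
      Real.log_rpow hS, Real.log_rpow hpz]
    have : (1:ℝ)/(1+ρ) - 1 = -(ρ/(1+ρ)) := by
      field_simp
      ring
    rw [this]
    ring

lemma sum_tilt_log (hp : ∀ z, 0 ≤ p z) (hY : ∀ y, 0 < ∑ x, p (x, y)) (hρ : 0 < ρ) :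
    ∑ z, tilt p ρ z * Real.log (tilt p ρ z / p z)
      = ρ * (F' p ρ / F p ρ) - Real.log (F p ρ) := by
  have hF : 0 < F p ρ := F_pos hp hY (by linarith)
  have h1 : (1:ℝ) + ρ ≠ 0 := by positivity
  calc ∑ z, tilt p ρ z * Real.log (tilt p ρ z / p z)
      = ∑ z, (ρ * (tilt p ρ z * Real.log (S p ρ z.2))
          - (ρ/(1+ρ)) * (tilt p ρ z * Real.log (p z))
          - tilt p ρ z * Real.log (F p ρ)) :=
        Finset.sum_congr rfl fun z _ => tilt_log_term hp hY hρ z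
    _ = ρ * (∑ z, tilt p ρ z * Real.log (S p ρ z.2))
          - (ρ/(1+ρ)) * (∑ z, tilt p ρ z * Real.log (p z))
          - (∑ z, tilt p ρ z) * Real.log (F p ρ) := by
        rw [Finset.sum_sub_distrib, Finset.sum_sub_distrib, Finset.mul_sum, Finset.mul_sum,
          Finset.sum_mul]
    _ = ρ * (F' p ρ / F p ρ) - Real.log (F p ρ) := by
        rw [sum_tilt hp hY hρ, one_mul]
        congr 1
        have hA : ∑ z : 𝒳 × 𝒴, tilt p ρ z * Real.log (S p ρ z.2)
            = ∑ y, (S p ρ y ^ (1+ρ) / F p ρ) * Real.log (S p ρ y) := by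
          rw [Fintype.sum_prod_type, Finset.sum_comm]
          refine Finset.sum_congr rfl fun y _ => ?_
          show ∑ x, tilt p ρ (x, y) * Real.log (S p ρ y) = _
          rw [← Finset.sum_mul, sum_tilt_row hp hY hρ]
        have hB : ∑ z : 𝒳 × 𝒴, tilt p ρ z * Real.log (p z)
            = ∑ y, (S p ρ y ^ ρ / F p ρ) * W p ρ y := by
          rw [Fintype.sum_prod_type, Finset.sum_comm]
          refine Finset.sum_congr rfl fun y _ => ?_
          rw [W, Finset.mul_sum]
          refine Finset.sum_congr rfl fun x _ => ?_
          show tilt p ρ (x, y) * Real.log (p (x, y))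
              = S p ρ y ^ ρ / F p ρ * (p (x, y) ^ ((1:ℝ)/(1+ρ)) * Real.log (p (x, y)))
          rw [show tilt p ρ (x, y) = S p ρ y ^ ρ * p (x, y) ^ ((1:ℝ)/(1+ρ)) / F p ρ from
            tilt_eq hp hY hρ (x, y)]
          ring
        rw [hA, hB, F', Finset.sum_div, Finset.mul_sum, Finset.mul_sum, Finset.mul_sum,
          ← Finset.sum_sub_distrib]
        refine Finset.sum_congr rfl fun y _ => ?_
        rw [T'_eq hp hY hρ]
        field_simp

lemma klDiv_tilt_eq (hp : ∀ z, 0 ≤ p z) (hY : ∀ y, 0 < ∑ x, p (x, y)) (hρ : 0 < ρ) :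
    klDiv (tilt p ρ) p = (F' p ρ / F p ρ / Real.log 2) * ρ - gallagerE0 p ρ := by
  have hsum := sum_tilt_log hp hY hρ
  rw [klDiv]
  have : ∀ z : 𝒳 × 𝒴, tilt p ρ z * Real.logb 2 (tilt p ρ z / p z)
      = tilt p ρ z * Real.log (tilt p ρ z / p z) / Real.log 2 := fun z => by
    rw [Real.logb, mul_div_assoc]
  simp only [this]
  rw [← Finset.sum_div, hsum, gallagerE0_eq]
  ring


lemma hasDerivAt_ratio (hp : ∀ z, 0 ≤ p z) (hY : ∀ y, 0 < ∑ x, p (x, y)) (hρ : 0 < ρ) :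
    HasDerivAt (fun t => gallagerE0 p t / t) (klDiv (tilt p ρ) p / ρ ^ 2) ρ := by
  have hE := hasDerivAt_E0 hp hY hρ
  have h := hE.div (hasDerivAt_id ρ) hρ.ne'
  have : klDiv (tilt p ρ) p / ρ ^ 2
      = (F' p ρ / F p ρ / Real.log 2 * ρ - gallagerE0 p ρ * 1) / ρ ^ 2 := by
    rw [klDiv_tilt_eq hp hY hρ, mul_one]
  rw [this]
  exact h

end Tilt

lemma rpow_base_inj {a b e : ℝ} (ha : 0 ≤ a) (hb : 0 ≤ b) (he : 0 < e)
    (h : a ^ e = b ^ e) : a = b := by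
  rcases lt_trichotomy a b with hab | hab | hab
  · exact absurd h (ne_of_lt (Real.rpow_lt_rpow ha hab he))
  · exact hab
  · exact absurd h.symm (ne_of_lt (Real.rpow_lt_rpow hb hab he))

lemma gibbs {α : Type*} [Fintype α] (w q : α → ℝ) (hw : ∀ a, 0 ≤ w a)
    (hq : ∀ a, 0 ≤ q a) (hsupp : ∀ a, w a = 0 ↔ q a = 0)
    (hw1 : ∑ a, w a = 1) (hq1 : ∑ a, q a = 1) :
    0 ≤ klDiv w q ∧ (klDiv w q = 0 → w = q) := by
  set g : α → ℝ := fun a => q a - w a - w a * Real.log (q a / w a) with hg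
  have hgpos : ∀ a, 0 ≤ g a := by
    intro a
    by_cases hwa : w a = 0
    · simp [hg, hwa, (hsupp a).1 hwa]
    · have hw0 : 0 < w a := lt_of_le_of_ne (hw a) (Ne.symm hwa)
      have hq0 : 0 < q a := lt_of_le_of_ne (hq a) fun h => hwa ((hsupp a).2 h.symm)
      have hlog : Real.log (q a / w a) ≤ q a / w a - 1 :=
        Real.log_le_sub_one_of_pos (by positivity)
      have := mul_le_mul_of_nonneg_left hlog hw0.le
      simp only [hg]
      rw [mul_sub, mul_div_cancel₀ _ hw0.ne', mul_one] at this
      linarith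
  have hterm : ∀ a, w a * Real.log (w a / q a) = -(w a * Real.log (q a / w a)) := by
    intro a
    by_cases hwa : w a = 0
    · simp [hwa]
    · have hw0 : 0 < w a := lt_of_le_of_ne (hw a) (Ne.symm hwa)
      have hq0 : 0 < q a := lt_of_le_of_ne (hq a) fun h => hwa ((hsupp a).2 h.symm)
      rw [Real.log_div hw0.ne' hq0.ne', Real.log_div hq0.ne' hw0.ne']
      ring
  have hsumg : ∑ a, g a = ∑ a, w a * Real.log (w a / q a) := by
    simp only [hg]
    rw [Finset.sum_sub_distrib, Finset.sum_sub_distrib, hw1, hq1]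
    simp only [hterm, Finset.sum_neg_distrib]
    ring
  have hkl : klDiv w q = (∑ a, g a) / Real.log 2 := by
    rw [klDiv, hsumg, Finset.sum_div]
    refine Finset.sum_congr rfl fun a _ => ?_
    rw [Real.logb, mul_div_assoc]
  have hsum_nonneg : 0 ≤ ∑ a, g a := Finset.sum_nonneg fun a _ => hgpos a
  constructor
  · rw [hkl]
    positivity
  · intro h0
    rw [hkl, div_eq_zero_iff] at h0
    have hS0 : ∑ a, g a = 0 := by
      rcases h0 with h | h
      · exact h
      · exact absurd h (Real.log_ne_zero_of_pos_of_ne_one (by norm_num) (by norm_num))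
    have hzero : ∀ a ∈ Finset.univ, g a = 0 :=
      (Finset.sum_eq_zero_iff_of_nonneg fun a _ => hgpos a).1 hS0
    funext a
    by_cases hwa : w a = 0
    · rw [hwa, ((hsupp a).1 hwa).symm]
    · have hw0 : 0 < w a := lt_of_le_of_ne (hw a) (Ne.symm hwa)
      have hq0 : 0 < q a := lt_of_le_of_ne (hq a) fun h => hwa ((hsupp a).2 h.symm)
      have hga := hzero a (Finset.mem_univ a)
      by_contra hne
      have hne' : q a / w a ≠ 1 := by
        intro h
        exact hne (by field_simp at h; linarith)
      have hlt : Real.log (q a / w a) < q a / w a - 1 :=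
        Real.log_lt_sub_one_of_pos (by positivity) hne'
      have := mul_lt_mul_of_pos_left hlt hw0
      rw [mul_sub, mul_div_cancel₀ _ hw0.ne', mul_one] at this
      simp only [hg] at hga
      linarith


lemma exists_support (hp : ∀ z, 0 ≤ p z) (hY : ∀ y, 0 < ∑ x, p (x, y)) (y : 𝒴) :
    ∃ x, p (x, y) ≠ 0 := by
  by_contra h
  push_neg at h
  have : ∑ x, p (x, y) = 0 := Finset.sum_eq_zero fun x _ => h x
  exact absurd (hY y) (by simp [this])

lemma condUniform_of_tilt_eq [Nonempty 𝒴] (hp : ∀ z, 0 ≤ p z)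
    (hY : ∀ y, 0 < ∑ x, p (x, y)) (hρ : 0 < ρ) (heq : tilt p ρ = p) :
    CondUniform p := by
  classical
  have hF : 0 < F p ρ := F_pos hp hY (by linarith)
  have h1ρ : (0:ℝ) < 1 + ρ := by linarith
  have step1 : ∀ z : 𝒳 × 𝒴, p z ≠ 0 →
      p z ^ (ρ/(1+ρ)) * F p ρ = S p ρ z.2 ^ ρ := by
    intro z hz
    have hpz : 0 < p z := lt_of_le_of_ne (hp z) (Ne.symm hz)
    have he : S p ρ z.2 ^ ρ * p z ^ ((1:ℝ)/(1+ρ)) / F p ρ = p z := by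
      rw [← tilt_eq hp hY hρ, heq]
    rw [div_eq_iff hF.ne'] at he
    have hq0 : (0:ℝ) < p z ^ ((1:ℝ)/(1+ρ)) := Real.rpow_pos_of_pos hpz _
    have h3 : p z ^ ((1:ℝ)/(1+ρ)) * (S p ρ z.2 ^ ρ)
        = p z ^ ((1:ℝ)/(1+ρ)) * (p z ^ (ρ/(1+ρ)) * F p ρ) := by
      rw [show p z ^ ((1:ℝ)/(1+ρ)) * (p z ^ (ρ/(1+ρ)) * F p ρ)
          = p z ^ ((1:ℝ)/(1+ρ)) * p z ^ (ρ/(1+ρ)) * F p ρ by ring,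
        ← Real.rpow_add hpz, ← add_div, div_self h1ρ.ne', Real.rpow_one]
      linear_combination he
    exact (mul_left_cancel₀ hq0.ne' h3).symm
  set Ms : 𝒴 → ℕ := fun y => (Finset.univ.filter fun x => p (x, y) ≠ 0).card with hMs
  have key : ∀ y : 𝒴, ∃ c : ℝ, 0 < c ∧ (∀ x, p (x, y) ≠ 0 → p (x, y) = c)
      ∧ (∑ x, p (x, y)) = (Ms y : ℝ) * c ∧ F p ρ = (Ms y : ℝ) ^ ρ := by
    intro y
    obtain ⟨x₀, hx₀⟩ := exists_support hp hY y
    have hc0 : 0 < p (x₀, y) := lt_of_le_of_ne (hp _) (Ne.symm hx₀)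
    have hconst : ∀ x, p (x, y) ≠ 0 → p (x, y) = p (x₀, y) := by
      intro x hx
      have e1 := step1 (x, y) hx
      have e2 := step1 (x₀, y) hx₀
      have : p (x, y) ^ (ρ/(1+ρ)) = p (x₀, y) ^ (ρ/(1+ρ)) :=
        mul_right_cancel₀ hF.ne' (e1.trans e2.symm)
      exact rpow_base_inj (hp _) (hp _) (by positivity) this
    have hmarg : (∑ x, p (x, y)) = (Ms y : ℝ) * p (x₀, y) := by
      rw [← Finset.sum_filter_ne_zero,
        Finset.sum_congr rfl (fun x hx => hconst x (Finset.mem_filter.1 hx).2),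
        Finset.sum_const, nsmul_eq_mul]
    have hSy : S p ρ y = (Ms y : ℝ) * p (x₀, y) ^ ((1:ℝ)/(1+ρ)) := by
      rw [S, ← Finset.sum_subset (Finset.filter_subset (fun x => p (x, y) ≠ 0) univ)
        (fun x _ hx => by
          have : p (x, y) = 0 := by simpa using hx
          rw [this, Real.zero_rpow (by positivity)]),
        Finset.sum_congr rfl (fun x hx => by
          rw [hconst x (Finset.mem_filter.1 hx).2]),
        Finset.sum_const, nsmul_eq_mul]
    have hFM : F p ρ = (Ms y : ℝ) ^ ρ := by
      have e := step1 (x₀, y) hx₀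
      rw [show (x₀, y).2 = y from rfl, hSy,
        Real.mul_rpow (Nat.cast_nonneg _) (Real.rpow_nonneg hc0.le _),
        ← Real.rpow_mul hc0.le, show (1:ℝ)/(1+ρ) * ρ = ρ/(1+ρ) by ring] at e
      have hr0 : (0:ℝ) < p (x₀, y) ^ (ρ/(1+ρ)) := Real.rpow_pos_of_pos hc0 _
      exact mul_left_cancel₀ hr0.ne' (by linear_combination e)
    exact ⟨p (x₀, y), hc0, hconst, hmarg, hFM⟩
  obtain ⟨y₀⟩ := ‹Nonempty 𝒴›
  refine ⟨Ms y₀, ?_⟩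
  rintro ⟨x, y⟩ hz
  obtain ⟨c, hc0, hconst, hmarg, hFM⟩ := key y
  obtain ⟨c₀, hc00, -, -, hFM₀⟩ := key y₀
  have hM : (Ms y : ℝ) = (Ms y₀ : ℝ) :=
    rpow_base_inj (Nat.cast_nonneg _) (Nat.cast_nonneg _) hρ (hFM ▸ hFM₀ ▸ rfl)
  have hMpos : (0:ℝ) < (Ms y : ℝ) := by
    have : x ∈ Finset.univ.filter fun x' => p (x', y) ≠ 0 :=
      Finset.mem_filter.2 ⟨Finset.mem_univ x, hz⟩
    have := Finset.card_pos.2 ⟨x, this⟩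
    exact_mod_cast this
  show p (x, y) / (∑ x', p (x', y)) = 1 / (Ms y₀ : ℝ)
  rw [hmarg, hconst x hz, ← hM]
  field_simp

end E0aux

open E0aux in
/-- `E₀(ρ)/ρ` is nondecreasing on `(0,∞)`; its derivative equals
`D(p̄^ρ_{XY}‖p_{XY})/ρ²`, which is strictly positive unless `p_{X|Y}` is conditionally
uniform on its support. -/
theorem E0_over_rho_monotone {𝒳 𝒴 : Type*} [Fintype 𝒳] [Fintype 𝒴]
    (p : 𝒳 × 𝒴 → ℝ) (hp : ∀ z, 0 ≤ p z) (hpsum : ∑ z, p z = 1)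
    (hY : ∀ y, 0 < ∑ x, p (x, y)) :
    MonotoneOn (fun ρ => gallagerE0 p ρ / ρ) (Set.Ioi (0 : ℝ)) ∧
    (∀ ρ : ℝ, 0 < ρ →
      HasDerivAt (fun t => gallagerE0 p t / t) (klDiv (tilt p ρ) p / ρ ^ 2) ρ) ∧
    (¬ CondUniform p → ∀ ρ : ℝ, 0 < ρ → 0 < klDiv (tilt p ρ) p / ρ ^ 2) := by
  obtain ⟨z₀, -, hz₀⟩ : ∃ z ∈ Finset.univ, p z ≠ 0 :=
    Finset.exists_ne_zero_of_sum_ne_zero (by rw [hpsum]; exact one_ne_zero)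
  haveI : Nonempty 𝒴 := ⟨z₀.2⟩
  have hgibbs : ∀ ρ : ℝ, 0 < ρ →
      0 ≤ klDiv (tilt p ρ) p ∧ (klDiv (tilt p ρ) p = 0 → tilt p ρ = p) :=
    fun ρ hρ => gibbs _ _ (tilt_nonneg hp hY hρ) hp
      (fun z => tilt_eq_zero_iff hp hY hρ z) (sum_tilt hp hY hρ) hpsum
  refine ⟨?_, fun ρ hρ => hasDerivAt_ratio hp hY hρ, ?_⟩
  · apply monotoneOn_of_deriv_nonneg (convex_Ioi 0)
    · intro x hx
      exact (hasDerivAt_ratio hp hY hx).continuousAt.continuousWithinAt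
    · rw [interior_Ioi]
      intro x hx
      exact (hasDerivAt_ratio hp hY hx).differentiableAt.differentiableWithinAt
    · rw [interior_Ioi]
      intro x hx
      rw [(hasDerivAt_ratio hp hY hx).deriv]
      exact div_nonneg (hgibbs x hx).1 (sq_nonneg x)
  · intro hcu ρ hρ
    rcases lt_or_eq_of_le (hgibbs ρ hρ).1 with h | h
    · exact div_pos h (pow_pos hρ 2)
    · exact absurd (condUniform_of_tilt_eq hp hY hρ ((hgibbs ρ hρ).2 h.symm)) hcu
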